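/- For 0 < ν < 1 and η ≥ 0, with λ = 2√ν·cosh η and y_c = −e^{η}/√ν, the following identity holds: W(y_c, ν, λ) = −(1−ν)·e^{−2η}·(e^{4η} − ν)·(1 − e^{2η}ν)². Consequently, if moreover λ < 1+ν (equivalently e^{2η}ν ≠ 1 in this range), then W(y_c,ν,λ) < 0. -/
import Mathlib


noncomputable def W (v l y : ℝ) : ℝ :=
  l^2*v^4*y^4 + 2*l*v^2*(l^2 + v^2 - 1)*y^3
    - v*(1 - 2*v*l^2 - l^4 + v^4 - 2*v^2)*y^2
    + 2*v*l*(1 + l^2 - v^2)*y + l^2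

theorem stmt6 (v η : ℝ) (hv0 : 0 < v) (hv1 : v < 1) (hη : 0 ≤ η) :
    W v (2*Real.sqrt v * Real.cosh η) (-(Real.exp η / Real.sqrt v)) =
      -(1 - v) * Real.exp (-2*η) * (Real.exp (4*η) - v) * (1 - Real.exp (2*η)*v)^2 ∧
    (2*Real.sqrt v * Real.cosh η < 1 + v →
      W v (2*Real.sqrt v * Real.cosh η) (-(Real.exp η / Real.sqrt v)) < 0) := by
  set s := Real.sqrt v with hs
  have hs0 : 0 < s := Real.sqrt_pos.mpr hv0
  have hsv : s^2 = v := Real.sq_sqrt hv0.le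
  set a := Real.exp η with ha
  have ha1 : 1 ≤ a := by
    rw [ha, ← Real.exp_zero]; exact Real.exp_le_exp.mpr hη
  have ha0 : 0 < a := lt_of_lt_of_le one_pos ha1
  have hcosh : Real.cosh η = (a + a⁻¹)/2 := by
    rw [Real.cosh_eq, ha, ← Real.exp_neg]
  have he2 : Real.exp (2*η) = a^2 := by
    rw [ha, ← Real.exp_nat_mul]; ring_nf
  have hen2 : Real.exp (-2*η) = (a^2)⁻¹ := by
    rw [← he2, ← Real.exp_neg]; ring_nf
  have he4 : Real.exp (4*η) = a^4 := by
    rw [ha, ← Real.exp_nat_mul]; ring_nf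
  have key : W v (2*s * Real.cosh η) (-(a / s)) =
      -(1 - v) * (a^2)⁻¹ * (a^4 - v) * (1 - a^2*v)^2 := by
    rw [hcosh, ← hsv, W]
    field_simp
    ring
  constructor
  · rw [key, hen2, he4, he2]
  · intro hlt
    rw [key]
    rw [hcosh, ← hsv] at hlt
    clear key hcosh he2 hen2 he4
    have hfac : (1 - s*a) * (1 - s*a⁻¹) > 0 := by
      have : 2*s*((a+a⁻¹)/2) = s*a + s*a⁻¹ := by ring
      have hinv : a * a⁻¹ = 1 := mul_inv_cancel₀ (ne_of_gt ha0)
      nlinarith [hinv]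
    have hsb : s*a⁻¹ < 1 := by
      have h1 : s < 1 := by nlinarith
      have h2 : a⁻¹ ≤ 1 := inv_le_one_of_one_le₀ ha1
      nlinarith
    have hsa : s*a < 1 := by
      by_contra h
      push_neg at h
      nlinarith
    have h1 : (0:ℝ) < 1 - s^2 := by rw [hsv]; linarith
    have ha4 : 1 ≤ a^4 := one_le_pow₀ ha1
    have h2 : (0:ℝ) < a^4 - s^2 := by rw [hsv]; linarith
    have h3 : (1 - a^2*s^2) > 0 := by nlinarith [hsa, mul_pos hs0 ha0]
    rw [← hsv]
    have hP := mul_pos (mul_pos (mul_pos h1 (inv_pos.mpr (pow_pos ha0 2))) h2) (pow_pos h3 2)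
    nlinarith [hP]
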